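/- Let 𝒢 be a mildly sparse class of graphs. Then for every integer s ≥ 1, there exists an integer C = C(𝒢, s) ≥ 1 such that every K_{s,s}-free graph G ∈ 𝒢 has average degree less than C · R(s, ω(G)+1). Moreover, if 𝒢 is in addition hereditary, then every K_{s,s}-free graph G ∈ 𝒢 has chromatic number at most C · R(s, ω(G)+1). -/

import Mathlib

open SimpleGraph

/-- The chromatic number of a graph as a natural number. -/
noncomputable def chromNum {V : Type*} (G : SimpleGraph V) : ℕ :=
  G.chromaticNumber.toNat

/-- The stability (independence) number of a graph. -/
noncomputable def indepNum {V : Type*} (G : SimpleGraph V) : ℕ := Gᶜ.cliqueNum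

/-- A stable (independent) set in a graph. -/
def IsStableSet {V : Type*} (G : SimpleGraph V) (S : Finset V) : Prop :=
  ∀ u ∈ S, ∀ v ∈ S, ¬ G.Adj u v

/-- The Ramsey number `R(s,w)`: the least `n ≥ 1` such that every graph on `n`
vertices contains a stable set of size `s` or a clique of size `w`. -/
noncomputable def ramsey (s w : ℕ) : ℕ :=
  sInf {n : ℕ | 1 ≤ n ∧ ∀ G : SimpleGraph (Fin n),
    (∃ S : Finset (Fin n), IsStableSet G S ∧ S.card = s) ∨
    (∃ S : Finset (Fin n), G.IsNClique w S)}

/-- `G` has no induced subgraph isomorphic to `H`. -/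
def IndFree {W V : Type*} (H : SimpleGraph W) (G : SimpleGraph V) : Prop :=
  ¬ Nonempty (H ↪g G)

/-- The number of ordered pairs `(a,b) ∈ A × B` forming an edge of `G`. -/
noncomputable def eCount {V : Type*} (G : SimpleGraph V) (A B : Finset V) : ℕ :=
  Set.ncard {p : V × V | p.1 ∈ A ∧ p.2 ∈ B ∧ G.Adj p.1 p.2}

/-- A graph is `(c,t)`-sparse if every two vertex subsets of size at least `t`
span at most a `(1-c)` fraction of the possible ordered adjacent pairs. -/
def CTSparse {V : Type*} [Fintype V] (G : SimpleGraph V) (c : ℝ) (t : ℕ) : Prop :=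
  ∀ A B : Finset V, t ≤ A.card → t ≤ B.card →
    (eCount G A B : ℝ) ≤ (1 - c) * A.card * B.card

/-- The average degree `2|E(G)|/|V(G)|` of a graph. -/
noncomputable def avgDeg {V : Type*} (G : SimpleGraph V) : ℝ :=
  2 * (G.edgeSet.ncard : ℝ) / (Nat.card V : ℝ)

/-- A class of (finite) graphs, given by a predicate on graphs on `Fin n`. -/
abbrev GraphClass := ∀ n : ℕ, SimpleGraph (Fin n) → Prop

/-- A class of graphs is hereditary if it is closed under taking induced
subgraphs (up to isomorphism). -/
def Hereditary (C : GraphClass) : Prop :=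
  ∀ (n : ℕ) (G : SimpleGraph (Fin n)) (m : ℕ) (H : SimpleGraph (Fin m)),
    C n G → Nonempty (H ↪g G) → C m H

/-- A class of graphs is mildly sparse if for every `c > 0` there is `C ≥ 1`
such that every `(c,t)`-sparse graph of the class has average degree
less than `C·t`. -/
def MildlySparse (C : GraphClass) : Prop :=
  ∀ c : ℝ, 0 < c → ∃ B : ℝ, 1 ≤ B ∧
    ∀ (t : ℕ), 1 ≤ t → ∀ (n : ℕ) (G : SimpleGraph (Fin n)), C n G →
      CTSparse G c t → avgDeg G < B * t

def ramseySet (s w : ℕ) : Set ℕ :=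
  {n : ℕ | 1 ≤ n ∧ ∀ G : SimpleGraph (Fin n),
    (∃ S : Finset (Fin n), IsStableSet G S ∧ S.card = s) ∨
    (∃ S : Finset (Fin n), G.IsNClique w S)}

lemma ramsey_eq (s w : ℕ) : ramsey s w = sInf (ramseySet s w) := rfl

lemma ramsey_subset {V : Type*} [DecidableEq V] (G : SimpleGraph V) {s w n : ℕ}
    (hn : n ∈ ramseySet s w) (A : Finset V) (hA : n ≤ A.card) :
    (∃ S : Finset V, S ⊆ A ∧ IsStableSet G S ∧ S.card = s) ∨
    (∃ S : Finset V, S ⊆ A ∧ G.IsNClique w S) := by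
  obtain ⟨A', hA'sub, hA'card⟩ := Finset.exists_subset_card_eq hA
  let e : Fin n ≃ A' := (A'.equivFinOfCardEq hA'card).symm
  let f : Fin n → V := fun i => (e i : V)
  have hf : Function.Injective f := fun i j h => e.injective (Subtype.ext h)
  have hfA : ∀ i, f i ∈ A := fun i => hA'sub (e i).2
  rcases hn.2 (G.comap f) with ⟨S', hS', hcard⟩ | ⟨S', hS'⟩
  · left
    refine ⟨S'.image f, ?_, ?_, ?_⟩
    · intro x hx
      obtain ⟨i, _, rfl⟩ := Finset.mem_image.mp hx
      exact hfA i
    · intro u hu v hv hadj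
      obtain ⟨i, hi, rfl⟩ := Finset.mem_image.mp hu
      obtain ⟨j, hj, rfl⟩ := Finset.mem_image.mp hv
      exact hS' i hi j hj hadj
    · rw [Finset.card_image_of_injective _ hf, hcard]
  · right
    refine ⟨S'.image f, ?_, ?_, ?_⟩
    · intro x hx
      obtain ⟨i, _, rfl⟩ := Finset.mem_image.mp hx
      exact hfA i
    · intro x hx y hy hxy
      simp only [Finset.coe_image, Set.mem_image, Finset.mem_coe] at hx hy
      obtain ⟨i, hi, rfl⟩ := hx
      obtain ⟨j, hj, rfl⟩ := hy
      exact hS'.1 hi hj (fun h => hxy (by rw [h]))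
    · rw [Finset.card_image_of_injective _ hf, hS'.2]

lemma ramseySet_nonempty : ∀ s w : ℕ, (ramseySet s w).Nonempty := by
  intro s
  induction s with
  | zero =>
    intro w
    exact ⟨1, le_refl 1, fun G => Or.inl ⟨∅, fun u hu => absurd hu (Finset.notMem_empty u), rfl⟩⟩
  | succ s ihs =>
    intro w
    induction w with
    | zero =>
      exact ⟨1, le_refl 1, fun G => Or.inr ⟨∅, SimpleGraph.isNClique_empty.mpr rfl⟩⟩
    | succ w ihw =>
      obtain ⟨a, ha⟩ := ihs (w + 1)
      obtain ⟨b, hb⟩ := ihw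
      refine ⟨a + b, le_trans ha.1 (Nat.le_add_right a b), fun G => ?_⟩
      classical
      have hab : 1 ≤ a + b := le_trans ha.1 (Nat.le_add_right a b)
      let v : Fin (a + b) := ⟨0, hab⟩
      let Nb : Finset (Fin (a + b)) := Finset.univ.filter (G.Adj v)
      have hvNb : v ∉ Nb := by simp [Nb]
      by_cases hbc : b ≤ Nb.card
      · rcases ramsey_subset G hb Nb hbc with ⟨S, _, hst, hcard⟩ | ⟨S, hSsub, hcl⟩
        · exact Or.inl ⟨S, hst, hcard⟩
        · refine Or.inr ⟨insert v S, ?_, ?_⟩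
          · rw [Finset.coe_insert]
            refine hcl.1.insert (fun x hx _ => ?_)
            have := hSsub hx
            simp only [Nb, Finset.mem_filter] at this
            exact this.2
          · have hvS : v ∉ S := fun h => hvNb (hSsub h)
            rw [Finset.card_insert_of_notMem hvS, hcl.2]
      · let Nn : Finset (Fin (a + b)) := Finset.univ \ insert v Nb
        have hNncard : a ≤ Nn.card := by
          have h1 : (insert v Nb).card = Nb.card + 1 := Finset.card_insert_of_notMem hvNb
          have h2 : Nn.card = (a + b) - (Nb.card + 1) := by
            rw [Finset.card_sdiff_of_subset (Finset.subset_univ _), h1]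
            simp
          omega
        rcases ramsey_subset G ha Nn hNncard with ⟨S, hSsub, hst, hcard⟩ | ⟨S, _, hcl⟩
        · refine Or.inl ⟨insert v S, ?_, ?_⟩
          · have hnadj : ∀ x ∈ S, ¬ G.Adj v x := by
              intro x hx
              have := hSsub hx
              simp only [Nn, Finset.mem_sdiff, Finset.mem_insert, Finset.mem_filter,
                Finset.mem_univ, true_and, not_or] at this
              exact fun h => this.2 (Finset.mem_filter.mpr ⟨Finset.mem_univ x, h⟩)
            intro x hx y hy
            rcases Finset.mem_insert.mp hx with rfl | hx' <;>
              rcases Finset.mem_insert.mp hy with rfl | hy'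
            · exact G.irrefl
            · exact hnadj _ hy'
            · exact fun h => hnadj _ hx' (G.adj_symm h)
            · exact hst _ hx' _ hy'
          · have hvS : v ∉ S := by
              intro h
              have := hSsub h
              simp [Nn] at this
            rw [Finset.card_insert_of_notMem hvS, hcard]
        · exact Or.inr ⟨S, hcl⟩

lemma ramsey_mem (s w : ℕ) : ramsey s w ∈ ramseySet s w :=
  Nat.sInf_mem (ramseySet_nonempty s w)

lemma ramsey_pos (s w : ℕ) : 1 ≤ ramsey s w := (ramsey_mem s w).1

lemma ramsey_mono {s w w' : ℕ} (h : w ≤ w') : ramsey s w ≤ ramsey s w' := by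
  refine Nat.sInf_le ⟨(ramsey_mem s w').1, fun G => ?_⟩
  rcases (ramsey_mem s w').2 G with hst | ⟨S, hcl⟩
  · exact Or.inl hst
  · obtain ⟨T, hTS, hTcard⟩ := Finset.exists_subset_card_eq (hcl.2 ▸ h)
    exact Or.inr ⟨T, hcl.1.subset (Finset.coe_subset.mpr hTS), hTcard⟩


lemma no_big_clique {V : Type*} [Fintype V] (G : SimpleGraph V) (S : Finset V) :
    ¬ G.IsNClique (G.cliqueNum + 1) S := by
  intro h
  have h2 := SimpleGraph.IsClique.card_le_cliqueNum (G := G) (tc := h.1)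
  rw [h.2] at h2
  omega

lemma eCount_eq {V : Type*} [DecidableEq V] (G : SimpleGraph V) [DecidableRel G.Adj]
    (A B : Finset V) :
    eCount G A B = ∑ a ∈ A, (B.filter (fun b => G.Adj a b)).card := by
  have hset : {p : V × V | p.1 ∈ A ∧ p.2 ∈ B ∧ G.Adj p.1 p.2} =
      ↑((A ×ˢ B).filter (fun p => G.Adj p.1 p.2)) := by
    ext ⟨a, b⟩
    simp only [Set.mem_setOf_eq, Finset.coe_filter, Finset.mem_product, Set.mem_setOf_eq]
    tauto
  rw [eCount, hset, Set.ncard_coe_finset, Finset.card_filter, Finset.sum_product]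
  refine Finset.sum_congr rfl (fun a _ => ?_)
  rw [Finset.card_filter]

lemma embedding_of_stable_pair {V : Type*} [DecidableEq V] (G : SimpleGraph V) {s : ℕ}
    (S T : Finset V) (hd : Disjoint S T) (hScard : S.card = s) (hTcard : T.card = s)
    (hS : IsStableSet G S) (hT : IsStableSet G T)
    (hST : ∀ a ∈ S, ∀ b ∈ T, G.Adj a b) :
    Nonempty (completeBipartiteGraph (Fin s) (Fin s) ↪g G) := by
  let eS : Fin s ≃ S := (S.equivFinOfCardEq hScard).symm
  let eT : Fin s ≃ T := (T.equivFinOfCardEq hTcard).symm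
  refine ⟨⟨⟨Sum.elim (fun i => (eS i : V)) (fun j => (eT j : V)), ?_⟩, ?_⟩⟩
  · intro x y h
    cases x with
    | inl i =>
      cases y with
      | inl i' =>
        simp only [Sum.elim_inl] at h
        exact congrArg Sum.inl (eS.injective (Subtype.ext h))
      | inr j =>
        simp only [Sum.elim_inl, Sum.elim_inr] at h
        exact absurd ((eT j).2) (fun hj => Finset.disjoint_left.mp hd (eS i).2 (h ▸ hj))
    | inr j =>
      cases y with
      | inl i =>
        simp only [Sum.elim_inl, Sum.elim_inr] at h
        exact absurd ((eT j).2) (fun hj => Finset.disjoint_left.mp hd (eS i).2 (h ▸ hj))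
      | inr j' =>
        simp only [Sum.elim_inr] at h
        exact congrArg Sum.inr (eT.injective (Subtype.ext h))
  · intro x y
    cases x with
    | inl i =>
      cases y with
      | inl i' =>
        simp only [Sum.elim_inl, completeBipartiteGraph_adj, Sum.isLeft_inl, Sum.isRight_inl]
        constructor
        · intro h; exact absurd h (hS _ (eS i).2 _ (eS i').2)
        · simp
      | inr j =>
        simp only [Sum.elim_inl, Sum.elim_inr, completeBipartiteGraph_adj, Sum.isLeft_inl,
          Sum.isRight_inr, Sum.isRight_inl, Sum.isLeft_inr]
        constructor
        · intro _; simp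
        · intro _; exact hST _ (eS i).2 _ (eT j).2
    | inr j =>
      cases y with
      | inl i =>
        simp only [Sum.elim_inl, Sum.elim_inr, completeBipartiteGraph_adj, Sum.isLeft_inl,
          Sum.isRight_inr, Sum.isRight_inl, Sum.isLeft_inr]
        constructor
        · intro _; simp
        · intro _; exact G.adj_symm (hST _ (eS i).2 _ (eT j).2)
      | inr j' =>
        simp only [Sum.elim_inr, completeBipartiteGraph_adj, Sum.isRight_inr, Sum.isLeft_inr]
        constructor
        · intro h; exact absurd h (hT _ (eT j).2 _ (eT j').2)
        · simp

lemma exists_stable_subset {V : Type*} [Fintype V] [DecidableEq V] (G : SimpleGraph V) {s : ℕ}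
    (A : Finset V) (hA : ramsey s (G.cliqueNum + 1) ≤ A.card) :
    ∃ S : Finset V, S ⊆ A ∧ IsStableSet G S ∧ S.card = s := by
  rcases ramsey_subset G (ramsey_mem s (G.cliqueNum + 1)) A hA with h | ⟨S, _, hcl⟩
  · exact h
  · exact absurd hcl (no_big_clique G S)

lemma sparse_of_KssFree {V : Type*} [Fintype V] [DecidableEq V] (G : SimpleGraph V)
    [DecidableRel G.Adj] {s : ℕ} (hs : 1 ≤ s)
    (hfree : IndFree (completeBipartiteGraph (Fin s) (Fin s)) G) :
    ∀ A B : Finset V, 2 * ramsey s (G.cliqueNum + 1) ≤ A.card →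
      2 * ramsey s (G.cliqueNum + 1) ≤ B.card →
      (eCount G A B : ℝ) ≤ (1 - 1 / (4 * s)) * A.card * B.card := by
  intro A B hA hB
  by_contra hcon
  push_neg at hcon
  set t := ramsey s (G.cliqueNum + 1) with ht
  have ht1 : 1 ≤ t := ramsey_pos _ _
  set c : ℝ := 1 / (4 * s) with hc
  have hs0 : (0 : ℝ) < s := by exact_mod_cast hs
  have hc0 : 0 < c := by positivity
  have hBpos : (0 : ℝ) < B.card := by
    have : 1 ≤ B.card := le_trans (by omega) hB
    exact_mod_cast this
  have hApos : (0 : ℝ) < A.card := by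
    have : 1 ≤ A.card := le_trans (by omega) hA
    exact_mod_cast this
  -- non-degree
  set nd : V → ℕ := fun a => (B.filter (fun b => ¬ G.Adj a b)).card with hnd
  have hndB : ∀ a, (B.filter (fun b => G.Adj a b)).card + nd a = B.card := by
    intro a
    exact Finset.card_filter_add_card_filter_not (fun b => G.Adj a b)
  have hsum : ∑ a ∈ A, (nd a : ℝ) < c * A.card * B.card := by
    have hecount : (eCount G A B : ℝ) = ∑ a ∈ A, ((B.filter (fun b => G.Adj a b)).card : ℝ) := by
      rw [eCount_eq]
      push_cast
      ring
    have hsplit : ∑ a ∈ A, (nd a : ℝ) = A.card * B.card - eCount G A B := by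
      have h0 : ∀ a ∈ A, (nd a : ℝ) = (B.card : ℝ) - (B.filter (fun b => G.Adj a b)).card := by
        intro a _
        have := hndB a
        push_cast [← this]
        ring
      rw [Finset.sum_congr rfl h0, Finset.sum_sub_distrib, Finset.sum_const, nsmul_eq_mul,
        hecount]
    rw [hsplit]
    nlinarith [hcon]
  -- Markov
  set A₁ : Finset V := A.filter (fun a => (nd a : ℝ) ≤ 2 * c * B.card) with hA₁
  have hA₁sub : A₁ ⊆ A := Finset.filter_subset _ _
  have hmark : ((A \ A₁).card : ℝ) * (2 * c * B.card) ≤ ∑ a ∈ A, (nd a : ℝ) := by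
    have h1 : ∀ a ∈ A \ A₁, 2 * c * B.card ≤ (nd a : ℝ) := by
      intro a ha
      rw [Finset.mem_sdiff, hA₁, Finset.mem_filter] at ha
      have := ha.2
      push_neg at this
      exact le_of_lt (this ha.1)
    calc ((A \ A₁).card : ℝ) * (2 * c * B.card)
        ≤ ∑ a ∈ A \ A₁, (nd a : ℝ) := by
          have := Finset.card_nsmul_le_sum (A \ A₁) (fun a => (nd a : ℝ)) _ h1
          rwa [nsmul_eq_mul] at this
      _ ≤ ∑ a ∈ A, (nd a : ℝ) := by
          refine Finset.sum_le_sum_of_subset_of_nonneg (Finset.sdiff_subset) ?_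
          intro a _ _
          positivity
  have hsdiff : (A \ A₁).card + A₁.card = A.card := Finset.card_sdiff_add_card_eq_card hA₁sub
  have hA₁big : (t : ℝ) < A₁.card := by
    have h2 : ((A \ A₁).card : ℝ) * (2 * c * B.card) < c * A.card * B.card :=
      lt_of_le_of_lt hmark hsum
    have h3 : ((A \ A₁).card : ℝ) < A.card / 2 := by
      have h2c : 0 < 2 * c * (B.card : ℝ) := by positivity
      nlinarith
    have h4 : (t : ℝ) ≤ A.card / 2 := by
      have : (2 * t : ℝ) ≤ A.card := by exact_mod_cast hA
      linarith
    have h5 : (A₁.card : ℝ) = A.card - (A \ A₁).card := by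
      have := hsdiff
      push_cast [← this]
      ring
    linarith
  have hA₁t : t ≤ A₁.card := by
    have := hA₁big
    exact_mod_cast le_of_lt this
  obtain ⟨S, hSA₁, hSstable, hScard⟩ := exists_stable_subset G A₁ hA₁t
  -- common neighbourhood
  set N : Finset V := B.filter (fun b => ∀ a ∈ S, G.Adj a b) with hN
  have hNB : N ⊆ B := Finset.filter_subset _ _
  have hBN : B \ N ⊆ S.biUnion (fun a => B.filter (fun b => ¬ G.Adj a b)) := by
    intro b hb
    rw [Finset.mem_sdiff, hN, Finset.mem_filter] at hb
    have : ∃ a ∈ S, ¬ G.Adj a b := by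
      by_contra hcon2
      push_neg at hcon2
      exact hb.2 ⟨hb.1, hcon2⟩
    obtain ⟨a, ha, hnadj⟩ := this
    exact Finset.mem_biUnion.mpr ⟨a, ha, Finset.mem_filter.mpr ⟨hb.1, hnadj⟩⟩
  have hBNcard : ((B \ N).card : ℝ) ≤ B.card / 2 := by
    have h1 : (B \ N).card ≤ ∑ a ∈ S, nd a := by
      refine le_trans (Finset.card_le_card hBN) ?_
      exact Finset.card_biUnion_le
    have h2 : ∑ a ∈ S, (nd a : ℝ) ≤ s * (2 * c * B.card) := by
      have : ∀ a ∈ S, (nd a : ℝ) ≤ 2 * c * B.card := by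
        intro a ha
        have := hSA₁ ha
        rw [hA₁, Finset.mem_filter] at this
        exact this.2
      calc ∑ a ∈ S, (nd a : ℝ) ≤ S.card • (2 * c * B.card) :=
            Finset.sum_le_card_nsmul _ _ _ this
        _ = s * (2 * c * B.card) := by rw [hScard, nsmul_eq_mul]
    have h3 : (s : ℝ) * (2 * c * B.card) = B.card / 2 := by
      rw [hc]
      field_simp
      ring
    have h4 : ((B \ N).card : ℝ) ≤ ∑ a ∈ S, (nd a : ℝ) := by
      exact_mod_cast h1
    linarith
  have hNt : t ≤ N.card := by
    have h5 : ((B \ N).card : ℝ) + N.card = B.card := by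
      have := Finset.card_sdiff_add_card_eq_card hNB
      exact_mod_cast this
    have h6 : (t : ℝ) ≤ B.card / 2 := by
      have : (2 * t : ℝ) ≤ B.card := by exact_mod_cast hB
      linarith
    have : (t : ℝ) ≤ N.card := by linarith
    exact_mod_cast this
  obtain ⟨T, hTN, hTstable, hTcard⟩ := exists_stable_subset G N hNt
  have hd : Disjoint S T := by
    rw [Finset.disjoint_left]
    intro b hbS hbT
    have hbN := hTN hbT
    rw [hN, Finset.mem_filter] at hbN
    exact G.irrefl (hbN.2 b hbS)
  have hST : ∀ a ∈ S, ∀ b ∈ T, G.Adj a b := by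
    intro a ha b hb
    have hbN := hTN hb
    rw [hN, Finset.mem_filter] at hbN
    exact hbN.2 a ha
  exact hfree (embedding_of_stable_pair G S T hd hScard hTcard hSstable hTstable hST)

lemma greedy_aux {V : Type*} [DecidableEq V] (G : SimpleGraph V) [DecidableRel G.Adj] (k : ℕ)
    (h : ∀ T : Finset V, T.Nonempty → ∃ v ∈ T, (T.filter (G.Adj v)).card < k) :
    ∀ (m : ℕ) (T : Finset V), T.card = m →
      ∃ f : V → ℕ, (∀ v ∈ T, f v < k) ∧ ∀ u ∈ T, ∀ v ∈ T, G.Adj u v → f u ≠ f v := by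
  intro m
  induction m with
  | zero =>
    intro T hT
    rw [Finset.card_eq_zero] at hT
    subst hT
    exact ⟨fun _ => 0, by simp, by simp⟩
  | succ m ih =>
    intro T hT
    have hTne : T.Nonempty := by rw [← Finset.card_pos, hT]; omega
    obtain ⟨v, hvT, hdeg⟩ := h T hTne
    obtain ⟨f, hfb, hfv⟩ := ih (T.erase v) (by rw [Finset.card_erase_of_mem hvT, hT]; rfl)
    set used : Finset ℕ := ((T.filter (G.Adj v)).image f) with hused
    have husedcard : used.card < k := lt_of_le_of_lt Finset.card_image_le hdeg
    have hne : (Finset.range k \ used).Nonempty := by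
      rw [← Finset.card_pos]
      have h1 := Finset.le_card_sdiff used (Finset.range k)
      rw [Finset.card_range] at h1
      omega
    obtain ⟨cnew, hcnew⟩ := hne
    rw [Finset.mem_sdiff, Finset.mem_range] at hcnew
    refine ⟨Function.update f v cnew, ?_, ?_⟩
    · intro u hu
      by_cases hu' : u = v
      · subst hu'; rw [Function.update_self]; exact hcnew.1
      · rw [Function.update_of_ne hu']; exact hfb u (Finset.mem_erase.mpr ⟨hu', hu⟩)
    · intro u hu w hw hadj
      by_cases huv : u = v <;> by_cases hwv : w = v
      · subst huv; subst hwv; exact absurd hadj (G.irrefl)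
      · subst huv
        rw [Function.update_self, Function.update_of_ne hwv]
        intro heq
        exact hcnew.2 (heq ▸ Finset.mem_image_of_mem f (Finset.mem_filter.mpr ⟨hw, hadj⟩))
      · subst hwv
        rw [Function.update_of_ne huv, Function.update_self]
        intro heq
        exact hcnew.2 (heq ▸ Finset.mem_image_of_mem f (Finset.mem_filter.mpr ⟨hu, G.adj_symm hadj⟩))
      · rw [Function.update_of_ne huv, Function.update_of_ne hwv]
        exact hfv u (Finset.mem_erase.mpr ⟨huv, hu⟩) w (Finset.mem_erase.mpr ⟨hwv, hw⟩) hadj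

lemma colorable_greedy {V : Type*} [Fintype V] [DecidableEq V] (G : SimpleGraph V)
    [DecidableRel G.Adj] (k : ℕ)
    (h : ∀ T : Finset V, T.Nonempty → ∃ v ∈ T, (T.filter (G.Adj v)).card < k) :
    G.Colorable k := by
  obtain ⟨f, hfb, hfv⟩ := greedy_aux G k h Finset.univ.card Finset.univ rfl
  rw [SimpleGraph.colorable_iff_exists_bdd_nat_coloring]
  exact ⟨SimpleGraph.Coloring.mk f
    (fun {u v} hadj => hfv u (Finset.mem_univ u) v (Finset.mem_univ v) hadj),
    fun v => hfb v (Finset.mem_univ v)⟩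

lemma cliqueNum_le_of_embedding {V W : Type*} [Fintype V] [Fintype W] {G : SimpleGraph V}
    {H : SimpleGraph W} (f : H ↪g G) : H.cliqueNum ≤ G.cliqueNum := by
  classical
  obtain ⟨S, hS⟩ := H.exists_isNClique_cliqueNum
  have hcl : G.IsNClique H.cliqueNum (S.image f) := by
    constructor
    · intro x hx y hy hxy
      simp only [Finset.coe_image, Set.mem_image, Finset.mem_coe] at hx hy
      obtain ⟨i, hi, rfl⟩ := hx
      obtain ⟨j, hj, rfl⟩ := hy
      rw [f.map_adj_iff]
      exact hS.1 hi hj (fun hh => hxy (by rw [hh]))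
    · rw [Finset.card_image_of_injective _ f.injective, hS.2]
  have := SimpleGraph.IsClique.card_le_cliqueNum (G := G) (tc := hcl.1)
  rwa [hcl.2] at this


lemma avgDeg_nonneg {V : Type*} (G : SimpleGraph V) : 0 ≤ avgDeg G := by
  rw [avgDeg]
  positivity

lemma exists_low_degree {m : ℕ} (H : SimpleGraph (Fin m)) [DecidableRel H.Adj] (hm : 0 < m)
    (X : ℕ) (h : avgDeg H < X) : ∃ v, H.degree v < X := by
  by_contra hcon
  push_neg at hcon
  have hsum : m * X ≤ ∑ v, H.degree v := by
    calc m * X = ∑ _v : Fin m, X := by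
          rw [Finset.sum_const, Finset.card_univ, Fintype.card_fin, smul_eq_mul]
      _ ≤ ∑ v, H.degree v := Finset.sum_le_sum (fun v _ => hcon v)
  rw [SimpleGraph.sum_degrees_eq_twice_card_edges] at hsum
  have hedge : H.edgeSet.ncard = H.edgeFinset.card := by
    rw [← Set.ncard_coe_finset, SimpleGraph.coe_edgeFinset]
  have hX : (X : ℝ) ≤ avgDeg H := by
    rw [avgDeg, hedge, Nat.card_eq_fintype_card, Fintype.card_fin,
      le_div_iff₀ (by exact_mod_cast hm)]
    have : (m : ℝ) * X ≤ 2 * H.edgeFinset.card := by exact_mod_cast hsum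
    linarith
  linarith


/-- if a class `C` of graphs is mildly sparse, then for every
`s ≥ 1` there is an integer `B ≥ 1` such that every `K_{s,s}`-free graph of the
class has average degree less than `B·R(s, ω(G)+1)`; moreover, if `C` is in
addition hereditary, then every such graph has chromatic number at most
`B·R(s, ω(G)+1)`. -/
theorem stmt8 (C : GraphClass) (hC : MildlySparse C) (s : ℕ) (hs : 1 ≤ s) :
    ∃ B : ℕ, 1 ≤ B ∧
      (∀ (n : ℕ) (G : SimpleGraph (Fin n)), C n G →
        IndFree (completeBipartiteGraph (Fin s) (Fin s)) G →
        avgDeg G < (B * ramsey s (G.cliqueNum + 1) : ℕ)) ∧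
      (Hereditary C → ∀ (n : ℕ) (G : SimpleGraph (Fin n)), C n G →
        IndFree (completeBipartiteGraph (Fin s) (Fin s)) G →
        chromNum G ≤ B * ramsey s (G.cliqueNum + 1)) := by
  classical
  have hs0 : (0 : ℝ) < s := by exact_mod_cast hs
  obtain ⟨B₀, hB₀1, hB₀⟩ := hC (1 / (4 * s)) (by positivity)
  set B : ℕ := ⌈2 * B₀⌉₊ with hBdef
  have hB1 : 1 ≤ B := by
    have : (0 : ℝ) < 2 * B₀ := by linarith
    have := Nat.ceil_pos.mpr this
    omega
  have hle2B : (2 * B₀ : ℝ) ≤ (B : ℝ) := Nat.le_ceil _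
  have key : ∀ (n : ℕ) (G : SimpleGraph (Fin n)), C n G →
      IndFree (completeBipartiteGraph (Fin s) (Fin s)) G →
      avgDeg G < (B * ramsey s (G.cliqueNum + 1) : ℕ) := by
    intro n G hG hfree
    haveI : DecidableRel G.Adj := Classical.decRel _
    have hR1 : 1 ≤ ramsey s (G.cliqueNum + 1) := ramsey_pos _ _
    have hsp : CTSparse G (1 / (4 * s)) (2 * ramsey s (G.cliqueNum + 1)) :=
      sparse_of_KssFree G hs hfree
    have hlt := hB₀ (2 * ramsey s (G.cliqueNum + 1)) (by omega) n G hG hsp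
    have hfin : (B₀ * (2 * ramsey s (G.cliqueNum + 1) : ℕ) : ℝ) ≤
        ((B * ramsey s (G.cliqueNum + 1) : ℕ) : ℝ) := by
      push_cast
      have hRpos : (0 : ℝ) ≤ (ramsey s (G.cliqueNum + 1) : ℝ) := by positivity
      nlinarith
    linarith
  refine ⟨B, hB1, key, ?_⟩
  intro hHer n G hG hfree
  haveI : DecidableRel G.Adj := Classical.decRel _
  set k := B * ramsey s (G.cliqueNum + 1) with hk
  have hcol : G.Colorable k := by
    apply colorable_greedy
    intro T hTne
    set m := T.card with hm
    let e : Fin m ≃ T := (T.equivFinOfCardEq rfl).symm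
    let f : Fin m ↪ Fin n := ⟨fun i => (e i : Fin n), fun i j hij => e.injective (Subtype.ext hij)⟩
    set H := G.comap ⇑f with hH
    have hembG : H ↪g G := SimpleGraph.Embedding.comap f G
    have hHC : C m H := hHer n G m H hG ⟨hembG⟩
    have hHfree : IndFree (completeBipartiteGraph (Fin s) (Fin s)) H := by
      intro ⟨g⟩
      exact hfree ⟨hembG.comp g⟩
    have havg := key m H hHC hHfree
    have hcliq : H.cliqueNum ≤ G.cliqueNum := cliqueNum_le_of_embedding hembG
    have hR : ramsey s (H.cliqueNum + 1) ≤ ramsey s (G.cliqueNum + 1) :=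
      ramsey_mono (by omega)
    have havg2 : avgDeg H < (k : ℕ) := by
      refine lt_of_lt_of_le havg ?_
      exact_mod_cast Nat.mul_le_mul_left B hR
    haveI : DecidableRel H.Adj := Classical.decRel _
    obtain ⟨v, hv⟩ := exists_low_degree H (by rw [hm]; exact Finset.card_pos.mpr hTne) k havg2
    refine ⟨(e v : Fin n), (e v).2, ?_⟩
    have hdeg : H.degree v = (T.filter (G.Adj (e v))).card := by
      rw [← SimpleGraph.card_neighborFinset_eq_degree]
      refine Finset.card_bij (fun j _ => (e j : Fin n)) ?_ ?_ ?_
      · intro j hj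
        rw [SimpleGraph.mem_neighborFinset] at hj
        exact Finset.mem_filter.mpr ⟨(e j).2, hj⟩
      · intro i hi j hj hij
        exact e.injective (Subtype.ext hij)
      · intro x hx
        rw [Finset.mem_filter] at hx
        refine ⟨e.symm ⟨x, hx.1⟩, ?_, ?_⟩
        · rw [SimpleGraph.mem_neighborFinset]
          show G.Adj (e v) (e (e.symm ⟨x, hx.1⟩))
          rw [Equiv.apply_symm_apply]
          exact hx.2
        · show ((e (e.symm ⟨x, hx.1⟩) : { y // y ∈ T }) : Fin n) = x
          rw [Equiv.apply_symm_apply]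
    rw [← hdeg]
    exact hv
  have hle := hcol.chromaticNumber_le
  rw [chromNum]
  exact ENat.toNat_le_of_le_coe hle
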